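/- For all k ∈ ℤ and nonzero l ∈ ℤ, the commutator identity [a_n(l), x_n⁺(k)] = ([2l]_t/l) · x_n⁺(k+l) holds in M_{2n+1}(R). -/

import Mathlib

noncomputable section

open LaurentPolynomial

/-- The base field `F = ℚ(t)`. -/
abbrev F : Type := RatFunc ℚ

/-- The Laurent polynomial ring `R = F[z, z⁻¹]`. -/
abbrev R : Type := LaurentPolynomial F

/-- The generator `t` of `ℚ(t)`. -/
def t : F := RatFunc.X

/-- `q = t²`, so that `q_n = q^{1/2} = t` for type `B_n⁽¹⁾`. -/
def q : F := t ^ 2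

/-- The quantum integer `[m]_t = (t^m − t^{−m})/(t − t^{−1})` in the base `t`. -/
def qit (m : ℤ) : F := (t ^ m - t ^ (-m)) / (t - t⁻¹)

/-- The matrix unit `E_{ab} ∈ M_N(R)` in the 1-based labels
`v_1,…,v_n,v_0,v_{n̄},…,v_{1̄}` (so `v_0 ↔ n+1`, `v_{ī} ↔ 2n+2−i`). -/
def E (N a b : ℕ) : Matrix (Fin N) (Fin N) R :=
  Matrix.of fun r s => if (r : ℕ) + 1 = a ∧ (s : ℕ) + 1 = b then (1 : R) else 0

/-- The element `(q^c z)^k ∈ R`. -/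
def zq (c k : ℤ) : R := C (q ^ (c * k)) * T k

/-- `x_n⁺(k) = (q^n z)^k [2]_t E_{n,0} + (q^{n−1}z)^k E_{0,n̄}` in `M_{2n+1}(R)`. -/
def xpB (n : ℕ) (k : ℤ) : Matrix (Fin (2*n+1)) (Fin (2*n+1)) R :=
  (zq n k * C (qit 2)) • E (2*n+1) n (n+1) + zq ((n : ℤ) - 1) k • E (2*n+1) (n+1) (n+2)

/-- `x_n⁻(k) = (q^{n−1}z)^k [2]_t E_{n̄,0} + (q^n z)^k E_{0,n}` in `M_{2n+1}(R)`. -/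
def xmB (n : ℕ) (k : ℤ) : Matrix (Fin (2*n+1)) (Fin (2*n+1)) R :=
  (zq ((n : ℤ) - 1) k * C (qit 2)) • E (2*n+1) (n+2) (n+1) + zq n k • E (2*n+1) (n+1) n

/-- `a_n(l) = ([2l]_t/l)(q^{n−1}z)^l ((E_{n,n} − q^l E_{0,0}) + (E_{0,0} − q^l E_{n̄,n̄}))`
in `M_{2n+1}(R)`. -/
def aB (n : ℕ) (l : ℤ) : Matrix (Fin (2*n+1)) (Fin (2*n+1)) R :=
  (C (qit (2 * l) / (l : F)) * zq ((n : ℤ) - 1) l) •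
    ((E (2*n+1) n n - C (q ^ l) • E (2*n+1) (n+1) (n+1)) +
     (E (2*n+1) (n+1) (n+1) - C (q ^ l) • E (2*n+1) (n+2) (n+2)))

lemma E_eq_std (N a b : ℕ) (ha : 0 < a) (hb : 0 < b) (ha' : a - 1 < N) (hb' : b - 1 < N) :
    E N a b = Matrix.single ⟨a-1, ha'⟩ ⟨b-1, hb'⟩ (1:R) := by
  ext r s
  simp only [E, Matrix.single, Matrix.of_apply, Fin.ext_iff]
  have hcond : ((r:ℕ)+1 = a ∧ (s:ℕ)+1 = b) ↔
      ((⟨a-1,ha'⟩ : Fin N) = r ∧ (⟨b-1,hb'⟩ : Fin N) = s) := by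
    simp only [Fin.ext_iff]
    omega
  simp only [hcond, Fin.ext_iff]

set_option maxHeartbeats 1600000 in
/-- `[a_n(l), x_n⁺(k)] = ([2l]_t/l) x_n⁺(k+l)` in `M_{2n+1}(R)`. -/
theorem aB_xpB_comm (n : ℕ) (hn : 2 ≤ n) (k l : ℤ) (hl : l ≠ 0) :
    aB n l * xpB n k - xpB n k * aB n l =
      C (qit (2 * l) / (l : F)) • xpB n (k + l) := by
  have hq : q ≠ 0 := by
    simp [q, t, RatFunc.X_ne_zero]
  have hi : n - 1 < 2*n+1 := by omega
  have hj : n + 1 - 1 < 2*n+1 := by omega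
  have hk : n + 2 - 1 < 2*n+1 := by omega
  set i : Fin (2*n+1) := ⟨n-1, hi⟩ with hidef
  set j : Fin (2*n+1) := ⟨n+1-1, hj⟩ with hjdef
  set m : Fin (2*n+1) := ⟨n+2-1, hk⟩ with hmdef
  have hij : i ≠ j := by simp only [hidef, hjdef, ne_eq, Fin.ext_iff]; omega
  have hji : j ≠ i := by simp only [hidef, hjdef, ne_eq, Fin.ext_iff]; omega
  have hmi : m ≠ i := by simp only [hidef, hmdef, ne_eq, Fin.ext_iff]; omega
  have hmj : m ≠ j := by simp only [hjdef, hmdef, ne_eq, Fin.ext_iff]; omega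
  have hjm : j ≠ m := by simp only [hjdef, hmdef, ne_eq, Fin.ext_iff]; omega
  have key1 : zq ((n:ℤ)-1) l * C (q ^ l) * zq n k = zq n (k+l) := by
    simp only [zq]
    rw [show ((n:ℤ)) * (k+l) = ((n:ℤ)-1)*l + (l + (n:ℤ)*k) by ring, zpow_add₀ hq,
      zpow_add₀ hq, T_add, map_mul, map_mul]
    ring
  have key2 : zq ((n:ℤ)-1) l * zq ((n:ℤ)-1) k = zq ((n:ℤ)-1) (k+l) := by
    simp only [zq]
    rw [show ((n:ℤ)-1) * (k+l) = ((n:ℤ)-1)*l + ((n:ℤ)-1)*k by ring, zpow_add₀ hq,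
      map_mul, T_add]
    ring
  have z1 : ∀ (a d : Fin (2*n+1)) (x y : R),
      Matrix.single a j x * Matrix.single i d y = 0 :=
    fun a d x y => Matrix.single_mul_single_of_ne (c := x) a j i hji y
  have z2 : ∀ (a d : Fin (2*n+1)) (x y : R),
      Matrix.single a m x * Matrix.single i d y = 0 :=
    fun a d x y => Matrix.single_mul_single_of_ne (c := x) a m i hmi y
  have z3 : ∀ (a d : Fin (2*n+1)) (x y : R),
      Matrix.single a m x * Matrix.single j d y = 0 :=
    fun a d x y => Matrix.single_mul_single_of_ne (c := x) a m j hmj y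
  have z4 : ∀ (a d : Fin (2*n+1)) (x y : R),
      Matrix.single a j x * Matrix.single m d y = 0 :=
    fun a d x y => Matrix.single_mul_single_of_ne (c := x) a j m hjm y
  have z5 : ∀ (a d : Fin (2*n+1)) (x y : R),
      Matrix.single a i x * Matrix.single j d y = 0 :=
    fun a d x y => Matrix.single_mul_single_of_ne (c := x) a i j hij y
  set A : R := C (qit (2 * l) / (l : F)) * zq ((n : ℤ) - 1) l with hA
  set s1 : R := zq n k * C (qit 2) with hs1
  set s2 : R := zq ((n:ℤ)-1) k with hs2
  have e1 : A * C (q ^ l) * s1 = C (qit (2 * l) / (l : F)) * (zq n (k+l) * C (qit 2)) := by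
    rw [← key1, hA, hs1]; ring
  have e2 : A * s2 = C (qit (2 * l) / (l : F)) * zq ((n:ℤ)-1) (k+l) := by
    rw [← key2, hA, hs2]; ring
  calc aB n l * xpB n k - xpB n k * aB n l
      = (A * C (q ^ l) * s1) • Matrix.single i j (1:R)
        + (A * s2) • Matrix.single j m (1:R) := by
        rw [aB, xpB,
          E_eq_std _ n n (by omega) (by omega) hi hi,
          E_eq_std _ n (n+1) (by omega) (by omega) hi hj,
          E_eq_std _ (n+1) (n+1) (by omega) (by omega) hj hj,
          E_eq_std _ (n+1) (n+2) (by omega) (by omega) hj hk,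
          E_eq_std _ (n+2) (n+2) (by omega) (by omega) hk hk]
        rw [← hidef, ← hjdef, ← hmdef, ← hA, ← hs1, ← hs2]
        simp only [Matrix.smul_mul, Matrix.mul_smul, add_mul, mul_add, sub_mul, mul_sub,
          smul_sub, smul_add, smul_smul,
          Matrix.single_mul_single_same,
          z1, z2, z3, z4, z5,
          mul_one, one_mul, smul_zero, sub_zero, zero_sub, add_zero, zero_add]
        rw [mul_comm s1 A, mul_comm s2 A, mul_comm s2 (A * C (q ^ l))]
        abel
    _ = C (qit (2 * l) / (l : F)) • xpB n (k + l) := by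
        rw [xpB,
          E_eq_std _ n (n+1) (by omega) (by omega) hi hj,
          E_eq_std _ (n+1) (n+2) (by omega) (by omega) hj hk,
          ← hidef, ← hjdef, ← hmdef]
        simp only [smul_add, smul_smul]
        rw [e1, e2]
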